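/- Let λ > 0, y ∈ ℝ³ and Φ ∈ ℂ² with ‖Φ‖² = 3λ/8. Define u = √(3/2)·U_{λ,y} and ψ(x) = U_{λ,y}(x)³·(Φ − c((x − y)/λ)Φ). Then ‖ψ(x)‖² = (3/4)·U_{λ,y}(x)⁴ for all x, and the pair (u, ψ) solves the Euclidean Dirac–Einstein system on all of ℝ³: −Δu(x) = ‖ψ(x)‖²·u(x) and Dψ(x) = u(x)²·ψ(x) for every x ∈ ℝ³. (Explicit form of the ground-state bubbles classified in Theorem 1.2 / Corollary 1.3, with normalizing constants made explicit.) -/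

import Mathlib

noncomputable section

/-- Points of Euclidean `ℝ³`. -/
abbrev R3 := EuclideanSpace ℝ (Fin 3)

/-- Spinors: `ℂ²` with its standard Hermitian inner product and norm. -/
abbrev Spinor := EuclideanSpace ℂ (Fin 2)

/-- The standard bubble `U_{λ,y}(x) = (2λ/(λ² + ‖x − y‖²))^(1/2)`. -/
def bubble (l : ℝ) (y : R3) (x : R3) : ℝ :=
  Real.sqrt (2 * l / (l ^ 2 + ‖x - y‖ ^ 2))

/-- The Euclidean Laplacian `Δu = ∑_{j=1}^3 ∂²u/∂x_j²`. -/
def laplacian (u : R3 → ℝ) (x : R3) : ℝ :=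
  ∑ j : Fin 3,
    fderiv ℝ (fun z => fderiv ℝ u z (EuclideanSpace.single j 1)) x (EuclideanSpace.single j 1)

/-- Pauli matrix `σ₁`. -/
def pauli1 : Matrix (Fin 2) (Fin 2) ℂ := !![0, 1; 1, 0]

/-- Pauli matrix `σ₂`. -/
def pauli2 : Matrix (Fin 2) (Fin 2) ℂ := !![0, -Complex.I; Complex.I, 0]

/-- Pauli matrix `σ₃`. -/
def pauli3 : Matrix (Fin 2) (Fin 2) ℂ := !![1, 0; 0, -1]

/-- Clifford multiplication by `v ∈ ℝ³`: the matrix `c(v) = −i(v₁σ₁ + v₂σ₂ + v₃σ₃)`. -/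
def cliffordMatrix (v : R3) : Matrix (Fin 2) (Fin 2) ℂ :=
  (-Complex.I) • ((v 0 : ℂ) • pauli1 + (v 1 : ℂ) • pauli2 + (v 2 : ℂ) • pauli3)

/-- The action of `c(v)` on a spinor. -/
def cliffordMul (v : R3) (φ : Spinor) : Spinor :=
  (WithLp.equiv 2 (Fin 2 → ℂ)).symm ((cliffordMatrix v).mulVec (WithLp.equiv 2 (Fin 2 → ℂ) φ))

/-- The flat Dirac operator `(Dψ)(x) = ∑_{j=1}^3 c(e_j) ∂ψ/∂x_j(x)`. -/
def Dirac (ψ : R3 → Spinor) (x : R3) : Spinor :=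
  ∑ j : Fin 3,
    cliffordMul (EuclideanSpace.single j 1) (fderiv ℝ ψ x (EuclideanSpace.single j 1))

/-- The ground-state scalar `u = √(3/2)·U_{λ,y}`. -/
def groundScalar (l : ℝ) (y : R3) (x : R3) : ℝ :=
  Real.sqrt (3 / 2) * bubble l y x

/-- The ground-state spinor `ψ(x) = U_{λ,y}(x)³·(Φ − c((x − y)/λ)Φ)`. -/
def groundSpinor (l : ℝ) (y : R3) (Φ : Spinor) (x : R3) : Spinor :=
  (bubble l y x ^ 3 : ℝ) • (Φ - cliffordMul (l⁻¹ • (x - y)) Φ)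

lemma clifford_apply0 (v : R3) (φ : Spinor) :
    cliffordMul v φ 0 = -Complex.I * v 2 * φ 0 + (-Complex.I * v 0 - v 1) * φ 1 := by
  simp [cliffordMul, cliffordMatrix, pauli1, pauli2, pauli3, Matrix.mulVec, dotProduct,
    Fin.sum_univ_two, Matrix.smul_apply, Matrix.add_apply, Matrix.vecHead, Matrix.vecTail]
  linear_combination ((v 1 : ℂ) * φ 1) * Complex.I_sq

lemma clifford_apply1 (v : R3) (φ : Spinor) :
    cliffordMul v φ 1 = (-Complex.I * v 0 + v 1) * φ 0 + Complex.I * v 2 * φ 1 := by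
  simp [cliffordMul, cliffordMatrix, pauli1, pauli2, pauli3, Matrix.mulVec, dotProduct,
    Fin.sum_univ_two, Matrix.smul_apply, Matrix.add_apply, Matrix.vecHead, Matrix.vecTail]
  linear_combination (-(v 1 : ℂ) * φ 0) * Complex.I_sq

lemma spinor_ext {φ χ : Spinor} (h0 : φ 0 = χ 0) (h1 : φ 1 = χ 1) : φ = χ := by
  ext i
  fin_cases i <;> assumption

lemma clifford_add_right (v : R3) (φ χ : Spinor) :
    cliffordMul v (φ + χ) = cliffordMul v φ + cliffordMul v χ := by
  apply spinor_ext <;>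
    simp [clifford_apply0, clifford_apply1, PiLp.add_apply] <;> ring

lemma clifford_sub_right (v : R3) (φ χ : Spinor) :
    cliffordMul v (φ - χ) = cliffordMul v φ - cliffordMul v χ := by
  apply spinor_ext <;>
    simp [clifford_apply0, clifford_apply1, PiLp.sub_apply] <;> ring

lemma clifford_smul_right (v : R3) (r : ℝ) (φ : Spinor) :
    cliffordMul v (r • φ) = r • cliffordMul v φ := by
  apply spinor_ext <;>
    simp [clifford_apply0, clifford_apply1, PiLp.smul_apply, Complex.real_smul] <;> ring

lemma clifford_add_left (v w : R3) (φ : Spinor) :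
    cliffordMul (v + w) φ = cliffordMul v φ + cliffordMul w φ := by
  apply spinor_ext <;>
    simp [clifford_apply0, clifford_apply1, PiLp.add_apply] <;> push_cast <;> ring

lemma clifford_smul_left (r : ℝ) (v : R3) (φ : Spinor) :
    cliffordMul (r • v) φ = r • cliffordMul v φ := by
  apply spinor_ext <;>
    simp [clifford_apply0, clifford_apply1, PiLp.smul_apply, Complex.real_smul] <;> push_cast <;> ring

lemma norm_sq_R3 (v : R3) : ‖v‖ ^ 2 = v 0 ^ 2 + v 1 ^ 2 + v 2 ^ 2 := by
  rw [EuclideanSpace.norm_eq, Real.sq_sqrt (by positivity)]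
  simp [Fin.sum_univ_three, Real.norm_eq_abs, sq_abs]

lemma clifford_clifford (v : R3) (φ : Spinor) :
    cliffordMul v (cliffordMul v φ) = -(‖v‖ ^ 2) • φ := by
  apply spinor_ext
  · simp [clifford_apply0, clifford_apply1, norm_sq_R3, PiLp.smul_apply, Complex.real_smul]
    push_cast
    linear_combination (((v 0 : ℂ) ^ 2 + (v 2 : ℂ) ^ 2) * φ 0) * Complex.I_sq
  · simp [clifford_apply0, clifford_apply1, norm_sq_R3, PiLp.smul_apply, Complex.real_smul]
    push_cast
    linear_combination (((v 0 : ℂ) ^ 2 + (v 2 : ℂ) ^ 2) * φ 1) * Complex.I_sq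

lemma clifford_sum_sq (φ : Spinor) :
    ∑ j : Fin 3, cliffordMul (EuclideanSpace.single j 1)
        (cliffordMul (EuclideanSpace.single j 1) φ) = (-3 : ℝ) • φ := by
  apply spinor_ext <;>
    · simp [Fin.sum_univ_three, clifford_apply0, clifford_apply1, EuclideanSpace.single_apply,
        PiLp.add_apply, PiLp.smul_apply, Complex.real_smul]
      push_cast
      ring_nf
      simp [Complex.I_sq]
      ring

lemma clifford_sum_single (v : R3) (φ : Spinor) :
    ∑ j : Fin 3, ((v j) • cliffordMul (EuclideanSpace.single j 1) φ) = cliffordMul v φ := by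
  apply spinor_ext <;>
    · simp [Fin.sum_univ_three, clifford_apply0, clifford_apply1, EuclideanSpace.single_apply,
        PiLp.add_apply, PiLp.smul_apply, Complex.real_smul]
      ring

lemma spinor_norm_sq (φ : Spinor) :
    ‖φ‖ ^ 2 = Complex.normSq (φ 0) + Complex.normSq (φ 1) := by
  rw [EuclideanSpace.norm_eq, Real.sq_sqrt (by positivity)]
  simp [Fin.sum_univ_two, Complex.sq_norm]

lemma clifford_norm_sq (v : R3) (φ : Spinor) :
    ‖cliffordMul v φ‖ ^ 2 = ‖v‖ ^ 2 * ‖φ‖ ^ 2 := by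
  rw [spinor_norm_sq, spinor_norm_sq, norm_sq_R3, clifford_apply0, clifford_apply1]
  simp [Complex.normSq_apply, Complex.add_re, Complex.add_im, Complex.mul_re, Complex.mul_im]
  ring

lemma clifford_inner_re (v : R3) (φ : Spinor) :
    Complex.re (inner ℂ φ (cliffordMul v φ) : ℂ) = 0 := by
  simp [PiLp.inner_apply, Fin.sum_univ_two, clifford_apply0, clifford_apply1,
    RCLike.inner_apply, Complex.add_re, Complex.mul_re, Complex.mul_im, Complex.conj_re,
    Complex.conj_im]
  ring

/-- radial profile -/
def bprof (l s : ℝ) : ℝ := Real.sqrt (2 * l / s)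

lemma hasDerivAt_bprof {l s : ℝ} (hl : 0 < l) (hs : 0 < s) :
    HasDerivAt (bprof l) (-(bprof l s) / (2 * s)) s := by
  have h1 : HasDerivAt (fun t : ℝ => 2 * l / t) (2 * l * -(s ^ 2)⁻¹) s := by
    simpa [div_eq_mul_inv] using (hasDerivAt_inv hs.ne').const_mul (2 * l)
  have h2 := (Real.hasDerivAt_sqrt (by positivity : (2 * l / s) ≠ 0)).comp s h1
  have hq : Real.sqrt (2 * l / s) ^ 2 = 2 * l / s := Real.sq_sqrt (by positivity)
  have hq0 : 0 < Real.sqrt (2 * l / s) := Real.sqrt_pos.2 (by positivity)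
  refine h2.congr_deriv ?_
  symm
  unfold bprof
  set q := Real.sqrt (2 * l / s) with hqdef
  field_simp
  field_simp at hq
  linear_combination (-1 : ℝ) * hq

lemma hasDerivAt_dbprof {l s : ℝ} (hl : 0 < l) (hs : 0 < s) :
    HasDerivAt (fun t => -(bprof l t) / (2 * t)) (3 * bprof l s / (4 * s ^ 2)) s := by
  have h1 : HasDerivAt (fun t => -(bprof l t)) (-( -(bprof l s) / (2 * s))) s :=
    (hasDerivAt_bprof hl hs).neg
  have h2 : HasDerivAt (fun t : ℝ => 2 * t) 2 s := by
    simpa using (hasDerivAt_id s).const_mul 2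
  have h3 := h1.div h2 (by positivity)
  refine h3.congr_deriv ?_
  symm
  field_simp
  ring

def sfun (l : ℝ) (y x : R3) : ℝ := l ^ 2 + ‖x - y‖ ^ 2

lemma sfun_pos {l : ℝ} (hl : 0 < l) (y x : R3) : 0 < sfun l y x := by
  have : (0:ℝ) ≤ ‖x - y‖ ^ 2 := by positivity
  have : 0 < l ^ 2 := by positivity
  unfold sfun; linarith

lemma bubble_eq (l : ℝ) (y x : R3) : bubble l y x = bprof l (sfun l y x) := rfl

lemma hasFDerivAt_sfun (l : ℝ) (y x : R3) :
    HasFDerivAt (sfun l y) (2 • innerSL ℝ (x - y)) x := by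
  have h : HasFDerivAt (fun z : R3 => z - y) (ContinuousLinearMap.id ℝ R3) x :=
    (hasFDerivAt_id x).sub_const y
  have h2 := h.norm_sq
  simp only [ContinuousLinearMap.comp_id] at h2
  exact h2.const_add (l ^ 2)

lemma DS_single (v : R3) (j : Fin 3) :
    (2 • innerSL ℝ v) (EuclideanSpace.single j 1) = 2 * v j := by
  have : (innerSL ℝ v) (EuclideanSpace.single j (1:ℝ)) = (1:ℝ) * v j := by
    simpa using EuclideanSpace.inner_single_right (𝕜 := ℝ) j 1 v
  simp [ContinuousLinearMap.smul_apply, this]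

lemma innerSL_single (v : R3) (j : Fin 3) :
    (innerSL ℝ v) (EuclideanSpace.single j 1) = v j := by
  simpa using EuclideanSpace.inner_single_right (𝕜 := ℝ) j 1 v

def gsD (l : ℝ) (y x : R3) : R3 →L[ℝ] ℝ :=
  (Real.sqrt (3/2) * (-(bprof l (sfun l y x)) / (2 * sfun l y x))) • (2 • innerSL ℝ (x - y))

lemma hasFDerivAt_groundScalar {l : ℝ} (hl : 0 < l) (y x : R3) :
    HasFDerivAt (groundScalar l y) (gsD l y x) x := by
  have hb := (hasDerivAt_bprof hl (sfun_pos hl y x)).comp_hasFDerivAt x (hasFDerivAt_sfun l y x)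
  have h2 := hb.const_mul (Real.sqrt (3/2))
  have : groundScalar l y = fun z => Real.sqrt (3/2) * bprof l (sfun l y z) := rfl
  rw [this]
  refine h2.congr_fderiv ?_
  rw [gsD, smul_smul]

lemma fderiv_groundScalar_single {l : ℝ} (hl : 0 < l) (y x : R3) (j : Fin 3) :
    fderiv ℝ (groundScalar l y) x (EuclideanSpace.single j 1) =
      (Real.sqrt (3/2) * 2) *
        ((-(bprof l (sfun l y x)) / (2 * sfun l y x)) * (x - y) j) := by
  rw [(hasFDerivAt_groundScalar hl y x).fderiv]
  rw [gsD, ContinuousLinearMap.smul_apply, DS_single, smul_eq_mul]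
  ring

lemma hasFDerivAt_db_comp {l : ℝ} (hl : 0 < l) (y x : R3) :
    HasFDerivAt (fun z => -(bprof l (sfun l y z)) / (2 * sfun l y z))
      ((3 * bprof l (sfun l y x) / (4 * sfun l y x ^ 2)) • (2 • innerSL ℝ (x - y))) x :=
  (hasDerivAt_dbprof hl (sfun_pos hl y x)).comp_hasFDerivAt x (hasFDerivAt_sfun l y x)

lemma hasFDerivAt_coord (y x : R3) (j : Fin 3) :
    HasFDerivAt (fun z : R3 => (z - y) j) (EuclideanSpace.proj j (𝕜 := ℝ) : R3 →L[ℝ] ℝ) x := by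
  have h := ((EuclideanSpace.proj j (𝕜 := ℝ) : R3 →L[ℝ] ℝ).hasFDerivAt
    (x := x - y)).comp x ((hasFDerivAt_id x).sub_const y)
  simp only [ContinuousLinearMap.comp_id] at h
  exact h

lemma second_deriv_term {l : ℝ} (hl : 0 < l) (y x : R3) (j : Fin 3) :
    fderiv ℝ (fun z => fderiv ℝ (groundScalar l y) z (EuclideanSpace.single j 1)) x
        (EuclideanSpace.single j 1) =
      (Real.sqrt (3/2) * 2) * ((-(bprof l (sfun l y x)) / (2 * sfun l y x))
        + ((3 * bprof l (sfun l y x) / (4 * sfun l y x ^ 2)) * (2 * (x - y) j)) * (x - y) j) := by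
  have heq : (fun z => fderiv ℝ (groundScalar l y) z (EuclideanSpace.single j 1))
      = fun z => (Real.sqrt (3/2) * 2) *
          ((-(bprof l (sfun l y z)) / (2 * sfun l y z)) * (z - y) j) :=
    funext fun z => fderiv_groundScalar_single hl y z j
  rw [heq]
  have hg := ((hasFDerivAt_db_comp hl y x).mul (hasFDerivAt_coord y x j)).const_mul
    (Real.sqrt (3/2) * 2)
  rw [HasFDerivAt.fderiv (f := fun z => (Real.sqrt (3/2) * 2) *
    ((-(bprof l (sfun l y z)) / (2 * sfun l y z)) * (z - y) j)) hg]
  have hproj : (EuclideanSpace.proj j (𝕜 := ℝ) : R3 →L[ℝ] ℝ) (EuclideanSpace.single j 1) = 1 := by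
    simp [EuclideanSpace.single_apply]
  simp [ContinuousLinearMap.add_apply, ContinuousLinearMap.smul_apply, DS_single, hproj,
    smul_eq_mul, EuclideanSpace.inner_single_right]
  ring

lemma laplacian_groundScalar {l : ℝ} (hl : 0 < l) (y x : R3) :
    laplacian (groundScalar l y) x =
      Real.sqrt (3/2) * 2 * (3 * (-(bprof l (sfun l y x)) / (2 * sfun l y x))
        + (3 * bprof l (sfun l y x) / (4 * sfun l y x ^ 2)) * 2 * ‖x - y‖ ^ 2) := by
  unfold laplacian
  rw [Fin.sum_univ_three, second_deriv_term hl y x 0, second_deriv_term hl y x 1,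
    second_deriv_term hl y x 2, norm_sq_R3 (x - y)]
  ring

lemma bubble_sq {l : ℝ} (hl : 0 < l) (y x : R3) :
    bubble l y x ^ 2 * sfun l y x = 2 * l := by
  have hs := sfun_pos hl y x
  rw [bubble_eq, bprof, Real.sq_sqrt (by positivity)]
  field_simp

lemma norm_groundSpinor {l : ℝ} (hl : 0 < l) (y : R3) (Φ : Spinor) (x : R3)
    (hΦ : ‖Φ‖ ^ 2 = 3 * l / 8) :
    ‖groundSpinor l y Φ x‖ ^ 2 = (3 / 4) * bubble l y x ^ 4 := by
  have hs := sfun_pos hl y x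
  have hb2 := bubble_sq hl y x
  have hbnn : 0 ≤ bubble l y x := Real.sqrt_nonneg _
  unfold groundSpinor
  rw [norm_smul, mul_pow]
  have hsub : ‖Φ - cliffordMul (l⁻¹ • (x - y)) Φ‖ ^ 2
      = ‖Φ‖ ^ 2 - 2 * Complex.re (inner ℂ Φ (cliffordMul (l⁻¹ • (x - y)) Φ) : ℂ)
        + ‖cliffordMul (l⁻¹ • (x - y)) Φ‖ ^ 2 := by
    simpa using norm_sub_sq (𝕜 := ℂ) Φ (cliffordMul (l⁻¹ • (x - y)) Φ)
  rw [hsub, clifford_inner_re, clifford_norm_sq, hΦ]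
  have hw : ‖l⁻¹ • (x - y)‖ ^ 2 = l⁻¹ ^ 2 * ‖x - y‖ ^ 2 := by
    rw [norm_smul, mul_pow, Real.norm_eq_abs, sq_abs]
  rw [hw]
  have hsdef : sfun l y x = l ^ 2 + ‖x - y‖ ^ 2 := rfl
  have hnorm : ‖(bubble l y x ^ 3 : ℝ)‖ = bubble l y x ^ 3 := by
    rw [Real.norm_eq_abs, abs_of_nonneg (by positivity)]
  rw [hnorm]
  have hl' : l ≠ 0 := hl.ne'
  rw [hsdef] at hb2
  field_simp
  linear_combination (12 * bubble l y x ^ 4) * hb2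

lemma part2 {l : ℝ} (hl : 0 < l) (y : R3) (Φ : Spinor) (x : R3)
    (hΦ : ‖Φ‖ ^ 2 = 3 * l / 8) :
    -laplacian (groundScalar l y) x = ‖groundSpinor l y Φ x‖ ^ 2 * groundScalar l y x := by
  rw [laplacian_groundScalar hl y x, norm_groundSpinor hl y Φ x hΦ]
  unfold groundScalar
  rw [← bubble_eq]
  have hs := sfun_pos hl y x
  have hb2 := bubble_sq hl y x
  have hsdef : sfun l y x = l ^ 2 + ‖x - y‖ ^ 2 := rfl
  set b := bubble l y x
  set s := sfun l y x
  set c := Real.sqrt (3/2)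
  set r2 := ‖x - y‖ ^ 2
  field_simp
  linear_combination (4 * c * b) * hsdef + (-(c * b) * (b ^ 2 * s + 2 * l)) * hb2

def cliffordCLM (Φ : Spinor) : R3 →L[ℝ] Spinor :=
  LinearMap.toContinuousLinearMap
    { toFun := fun v => cliffordMul v Φ
      map_add' := fun v w => clifford_add_left v w Φ
      map_smul' := fun r v => clifford_smul_left r v Φ }

@[simp] lemma cliffordCLM_apply (Φ : Spinor) (v : R3) : cliffordCLM Φ v = cliffordMul v Φ := rfl

lemma groundSpinor_eq (l : ℝ) (y : R3) (Φ : Spinor) (x : R3) :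
    groundSpinor l y Φ x = bprof l (sfun l y x) ^ 3 • (Φ - l⁻¹ • cliffordCLM Φ (x - y)) := by
  unfold groundSpinor
  rw [clifford_smul_left]
  rfl

def psiD (l : ℝ) (y : R3) (Φ : Spinor) (x : R3) : R3 →L[ℝ] Spinor :=
  (bprof l (sfun l y x) ^ 3) • (-(l⁻¹ • cliffordCLM Φ)) +
    ((3 * bprof l (sfun l y x) ^ 2 * (-(bprof l (sfun l y x)) / (2 * sfun l y x))) •
      (2 • innerSL ℝ (x - y))).smulRight (Φ - l⁻¹ • cliffordCLM Φ (x - y))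

lemma hasFDerivAt_groundSpinor {l : ℝ} (hl : 0 < l) (y : R3) (Φ : Spinor) (x : R3) :
    HasFDerivAt (groundSpinor l y Φ) (psiD l y Φ x) x := by
  have hS := hasFDerivAt_sfun l y x
  have hs := sfun_pos hl y x
  have hb3 : HasDerivAt (fun t => bprof l t ^ 3)
      (3 * bprof l (sfun l y x) ^ 2 * (-(bprof l (sfun l y x)) / (2 * sfun l y x)))
      (sfun l y x) := by
    have h := (hasDerivAt_bprof hl hs).pow 3
    norm_num at h
    exact h
    try ring
  have ha := hb3.comp_hasFDerivAt x hS
  have h1 : HasFDerivAt (fun z : R3 => cliffordCLM Φ (z - y)) (cliffordCLM Φ) x := by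
    simpa [Function.comp_def] using (cliffordCLM Φ).hasFDerivAt.comp x ((hasFDerivAt_id x).sub_const y)
  have hw : HasFDerivAt (fun z => Φ - l⁻¹ • cliffordCLM Φ (z - y)) (-(l⁻¹ • cliffordCLM Φ)) x := by
    simpa using (h1.const_smul l⁻¹).const_sub Φ
  have h := ha.smul hw
  have hfun : groundSpinor l y Φ
      = fun z => bprof l (sfun l y z) ^ 3 • (Φ - l⁻¹ • cliffordCLM Φ (z - y)) :=
    funext fun z => groundSpinor_eq l y Φ z
  rw [hfun, psiD]
  exact h

lemma part3 {l : ℝ} (hl : 0 < l) (y : R3) (Φ : Spinor) (x : R3) :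
    Dirac (groundSpinor l y Φ) x = (groundScalar l y x ^ 2 : ℝ) • groundSpinor l y Φ x := by
  have hs := sfun_pos hl y x
  have hb2 := bubble_sq hl y x
  rw [bubble_eq] at hb2
  have hsdef : sfun l y x = l ^ 2 + ‖x - y‖ ^ 2 := rfl
  set b := bprof l (sfun l y x) with hbdef
  set s := sfun l y x with hsdef2
  have hfd : ∀ j : Fin 3, fderiv ℝ (groundSpinor l y Φ) x (EuclideanSpace.single j 1)
      = (psiD l y Φ x) (EuclideanSpace.single j 1) :=
    fun j => by rw [(hasFDerivAt_groundSpinor hl y Φ x).fderiv]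
  have happ : ∀ j : Fin 3, (psiD l y Φ x) (EuclideanSpace.single j 1) =
      (-(b ^ 3 * l⁻¹)) • cliffordMul (EuclideanSpace.single j 1) Φ +
        ((3 * b ^ 2 * (-b / (2 * s)) * 2) * (x - y) j) •
          (Φ - l⁻¹ • cliffordMul (x - y) Φ) := fun j => by
    rw [psiD]
    simp only [ContinuousLinearMap.add_apply, ContinuousLinearMap.smul_apply,
      ContinuousLinearMap.neg_apply, ContinuousLinearMap.smulRight_apply,
      cliffordCLM_apply, innerSL_single, smul_eq_mul, nsmul_eq_mul, ← hbdef, ← hsdef2]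
    module
  unfold Dirac
  have step1 : ∀ j : Fin 3, cliffordMul (EuclideanSpace.single j 1)
        (fderiv ℝ (groundSpinor l y Φ) x (EuclideanSpace.single j 1))
      = (-(b ^ 3 * l⁻¹)) • cliffordMul (EuclideanSpace.single j 1)
            (cliffordMul (EuclideanSpace.single j 1) Φ)
        + (3 * b ^ 2 * (-b / (2 * s)) * 2) • ((x - y) j •
            cliffordMul (EuclideanSpace.single j 1) (Φ - l⁻¹ • cliffordMul (x - y) Φ)) := by
    intro j
    rw [hfd j, happ j, clifford_add_right, clifford_smul_right, clifford_smul_right]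
    module
  rw [Finset.sum_congr rfl (fun j _ => step1 j), Finset.sum_add_distrib, ← Finset.smul_sum,
    ← Finset.smul_sum, clifford_sum_sq, clifford_sum_single, clifford_sub_right,
    clifford_smul_right, clifford_clifford]
  rw [groundSpinor_eq, groundScalar, bubble_eq, cliffordCLM_apply, ← hsdef2, ← hbdef]
  have h32 : Real.sqrt (3 / 2) ^ 2 = 3 / 2 := Real.sq_sqrt (by norm_num)
  match_scalars
  · rw [mul_pow, h32]
    field_simp
    linear_combination (2 * b ^ 3) * hsdef + (-(b ^ 3 * l)) * hb2
  · rw [mul_pow, h32]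
    field_simp
    linear_combination (b ^ 3) * hb2

/-- Let `λ > 0`, `y ∈ ℝ³` and `Φ ∈ ℂ²` with `‖Φ‖² = 3λ/8`. Then the pair
`u = √(3/2)·U_{λ,y}`, `ψ(x) = U_{λ,y}(x)³·(Φ − c((x − y)/λ)Φ)` satisfies
`‖ψ‖² = (3/4)·U_{λ,y}⁴` and solves the Euclidean Dirac–Einstein system
`−Δu = ‖ψ‖²·u`, `Dψ = u²·ψ` on all of `ℝ³`. -/
theorem groundstate_solves_diracEinstein (l : ℝ) (hl : 0 < l) (y : R3) (Φ : Spinor)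
    (hΦ : ‖Φ‖ ^ 2 = 3 * l / 8) :
    (∀ x : R3, ‖groundSpinor l y Φ x‖ ^ 2 = (3 / 4) * bubble l y x ^ 4) ∧
      (∀ x : R3,
        -laplacian (groundScalar l y) x = ‖groundSpinor l y Φ x‖ ^ 2 * groundScalar l y x) ∧
      (∀ x : R3,
        Dirac (groundSpinor l y Φ) x = (groundScalar l y x ^ 2 : ℝ) • groundSpinor l y Φ x) := by
  exact ⟨fun x => norm_groundSpinor hl y Φ x hΦ, fun x => part2 hl y Φ x hΦ,
    fun x => part3 hl y Φ x⟩
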